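/- Let f : 2^T → ℝ≥0 be an XOS function (a pointwise maximum of finitely many nonnegative additive functions). Then for any S ⊆ U ⊆ T, Σ_{i ∈ S} (f(U) - f(U \ {i})) ≤ f(S). -/

import Mathlib

/-- If `f` is XOS (a pointwise maximum of finitely many
nonnegative additive functions), then for `S ⊆ U`,
`∑_{i ∈ S} (f U - f (U \ {i})) ≤ f S`. -/
theorem stmt_9 {T : Type*} [DecidableEq T] {ι : Type*}
    (L : Finset ι) (hL : L.Nonempty) (w : ι → T → ℝ)
    (hw : ∀ l i, 0 ≤ w l i)
    (f : Finset T → ℝ)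
    (hf : ∀ S : Finset T, f S = L.sup' hL (fun l => ∑ i ∈ S, w l i)) :
    ∀ S U : Finset T, S ⊆ U →
      ∑ i ∈ S, (f U - f (U.erase i)) ≤ f S := by
  intro S U hSU
  obtain ⟨l, hlL, hlU⟩ := Finset.exists_mem_eq_sup' hL (fun l => ∑ i ∈ U, w l i)
  have hfU : f U = ∑ i ∈ U, w l i := by rw [hf]; exact hlU
  have key : ∀ i ∈ S, f U - f (U.erase i) ≤ w l i := by
    intro i hi
    have hiU := hSU hi
    have h1 : ∑ j ∈ U.erase i, w l j ≤ f (U.erase i) := by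
      rw [hf]; exact Finset.le_sup' (fun l => ∑ j ∈ U.erase i, w l j) hlL
    have h2 : ∑ j ∈ U.erase i, w l j = ∑ j ∈ U, w l j - w l i := by
      rw [Finset.sum_erase_eq_sub hiU]
    rw [hfU]
    linarith
  calc ∑ i ∈ S, (f U - f (U.erase i)) ≤ ∑ i ∈ S, w l i :=
        Finset.sum_le_sum key
    _ ≤ f S := by rw [hf]; exact Finset.le_sup' (fun l => ∑ i ∈ S, w l i) hlL
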